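/- For the LAST construction on an undirected weighted graph: given parameter alpha > 1, there exists a spanning tree T rooted at v0 such that (a) for every vertex v, the path weight from v0 to v in T is at most alpha times the shortest-path distance from v0 to v in G, and (b) the total weight of T is at most (1 + 2/(alpha - 1)) times the weight of a minimum spanning tree of G. -/

import Mathlib

set_option linter.unusedSectionVars false

/-- A spanning tree (arborescence) rooted at `v0`, given by a parent map. -/
structure ArbTree (V : Type) (v0 : V) where
  parent : V → V
  root_fix : parent v0 = v0
  reaches : ∀ v, ∃ n, parent^[n] v = v0

/-- The number of tree edges on the path from `v` up to the root. -/
noncomputable def ArbTree.depth {V : Type} [DecidableEq V] {v0 : V}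
    (T : ArbTree V v0) (v : V) : ℕ :=
  Nat.find (T.reaches v)

/-- The recreation cost of `v`: total weight of the tree path from `v0` to `v`. -/
noncomputable def recCost {V : Type} [DecidableEq V] {v0 : V}
    (T : ArbTree V v0) (w : V → V → ℝ) (v : V) : ℝ :=
  ∑ i ∈ Finset.range (T.depth v), w (T.parent^[i+1] v) (T.parent^[i] v)

/-- The storage cost of the tree: total weight of its edges. -/
noncomputable def treeCost {V : Type} [Fintype V] [DecidableEq V] {v0 : V}
    (T : ArbTree V v0) (w : V → V → ℝ) : ℝ :=
  ∑ v ∈ Finset.univ.filter (· ≠ v0), w (T.parent v) v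

/-- The tree is a spanning tree of the graph with adjacency `Adj`. -/
def IsSpanning {V : Type} {v0 : V} (Adj : V → V → Prop) (T : ArbTree V v0) : Prop :=
  ∀ v, v ≠ v0 → Adj (T.parent v) v

/-- `l` is a walk from `a` to `b` in the graph with adjacency `Adj`. -/
def IsWalk {V : Type} (Adj : V → V → Prop) (a b : V) (l : List V) : Prop :=
  l.Chain' Adj ∧ l.head? = some a ∧ l.getLast? = some b

/-- Total weight of a walk. -/
def walkCost {V : Type} (w : V → V → ℝ) : List V → ℝ
  | [] => 0
  | [_] => 0
  | a :: b :: rest => w a b + walkCost w (b :: rest)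

/-- Shortest-path distance from `a` to `b`. -/
noncomputable def graphDist {V : Type} (Adj : V → V → Prop) (w : V → V → ℝ)
    (a b : V) : ℝ :=
  sInf {c | ∃ l, IsWalk Adj a b l ∧ walkCost w l = c}

section WalkBasics

variable {V : Type} {w : V → V → ℝ}

/-- auxiliary cost: cost of the walk `a :: l`. -/
def cost2 (w : V → V → ℝ) : V → List V → ℝ
  | _, [] => 0
  | a, b :: r => w a b + cost2 w b r

lemma walkCost_cons (a : V) (l : List V) : walkCost w (a :: l) = cost2 w a l := by
  induction l generalizing a with
  | nil => rfl
  | cons b r ih => simp [walkCost, cost2, ih]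

lemma cost2_nonneg (hw : ∀ a b, 0 ≤ w a b) (a : V) (l : List V) : 0 ≤ cost2 w a l := by
  induction l generalizing a with
  | nil => simp [cost2]
  | cons b r ih => simpa [cost2] using add_nonneg (hw a b) (ih b)

lemma walkCost_nonneg (hw : ∀ a b, 0 ≤ w a b) (l : List V) : 0 ≤ walkCost w l := by
  cases l with
  | nil => simp [walkCost]
  | cons a r => rw [walkCost_cons]; exact cost2_nonneg hw a r

lemma cost2_append (a : V) (l1 l2 : List V) :
    cost2 w a (l1 ++ l2) = cost2 w a l1 + cost2 w ((a :: l1).getLast (by simp)) l2 := by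
  induction l1 generalizing a with
  | nil => simp [cost2]
  | cons b r ih =>
      have hgl : (a :: b :: r).getLast (by simp) = (b :: r).getLast (by simp) :=
        List.getLast_cons (by simp)
      simp only [List.cons_append, cost2, hgl, List.append_eq]
      rw [ih b]
      ring

lemma getLast?_eq_some_iff {l : List V} {b : V} :
    l.getLast? = some b ↔ ∃ h : l ≠ [], l.getLast h = b := by
  constructor
  · intro h
    have hne : l ≠ [] := by rintro rfl; simp at h
    exact ⟨hne, by rw [List.getLast?_eq_getLast hne] at h; exact (Option.some_inj.mp h)⟩
  · rintro ⟨h, rfl⟩; exact List.getLast?_eq_getLast h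

lemma walkCost_append_last (l : List V) (hne : l ≠ []) (x : V) :
    walkCost w (l ++ [x]) = walkCost w l + w (l.getLast hne) x := by
  obtain ⟨a, t, rfl⟩ := List.exists_cons_of_ne_nil hne
  rw [List.cons_append, walkCost_cons, walkCost_cons, cost2_append]
  simp [cost2]

lemma isWalk_append_last {A : V → V → Prop} {a b c : V} {l : List V}
    (h : IsWalk A a b l) (hbc : A b c) : IsWalk A a c (l ++ [c]) := by
  obtain ⟨hc, hh, hl⟩ := h
  obtain ⟨hne, rfl⟩ := getLast?_eq_some_iff.mp hl
  refine ⟨?_, ?_, ?_⟩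
  · rw [List.Chain', List.isChain_append]
    exact ⟨hc, List.isChain_singleton _, by
      intro x hx y hy
      simp only [List.head?_cons, Option.mem_def, Option.some_inj] at hy
      rw [List.getLast?_eq_getLast hne] at hx
      simp only [Option.mem_def, Option.some_inj] at hx
      subst hx; subst hy; exact hbc⟩
  · rw [List.head?_append_of_ne_nil _ hne]  -- might not exist; fix later
    exact hh
  · simp

lemma isWalk_reverse {A : V → V → Prop} (hA : ∀ a b, A a b → A b a) {a b : V} {l : List V}
    (h : IsWalk A a b l) : IsWalk A b a l.reverse := by
  obtain ⟨hc, hh, hl⟩ := h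
  refine ⟨?_, ?_, ?_⟩
  · rw [List.Chain', List.isChain_reverse]
    exact hc.imp (fun x y hxy => hA x y hxy)
  · rw [List.head?_reverse]; exact hl
  · rw [List.getLast?_reverse]; exact hh

lemma chain'_of_mem_zip {A : V → V → Prop} {l : List V} (hc : l.Chain' A) {p : V × V}
    (hp : p ∈ l.zip l.tail) : A p.1 p.2 := by
  induction l with
  | nil => simp at hp
  | cons a t ih =>
      cases t with
      | nil => simp at hp
      | cons b r =>
          simp only [List.tail_cons, List.zip_cons_cons, List.mem_cons] at hp
          rcases hp with rfl | hp
          · exact hc.rel_head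
          · exact ih hc.tail hp

lemma walkCost_eq_zip_sum (l : List V) :
    walkCost w l = ((l.zip l.tail).map fun p => w p.1 p.2).sum := by
  induction l with
  | nil => simp [walkCost]
  | cons a t ih =>
      cases t with
      | nil => simp [walkCost]
      | cons b r => simp only [walkCost, List.tail_cons, List.zip_cons_cons, List.map_cons,
          List.sum_cons, ih]

/-- Any walk can be shortened to a duplicate-free walk of no greater cost. -/
lemma exists_nodup_walk (hw : ∀ a b, 0 ≤ w a b) {A : V → V → Prop} :
    ∀ (l : List V), l.Chain' A →
      ∃ l', l'.Chain' A ∧ l'.head? = l.head? ∧ l'.getLast? = l.getLast? ∧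
        l'.Nodup ∧ (∀ x ∈ l', x ∈ l) ∧ walkCost w l' ≤ walkCost w l := by
  suffices H : ∀ (n : ℕ) (l : List V), l.length = n → l.Chain' A →
      ∃ l', l'.Chain' A ∧ l'.head? = l.head? ∧ l'.getLast? = l.getLast? ∧
        l'.Nodup ∧ (∀ x ∈ l', x ∈ l) ∧ walkCost w l' ≤ walkCost w l by
    intro l hc; exact H l.length l rfl hc
  intro n
  induction n using Nat.strong_induction_on with
  | _ n ih =>
  intro l hn hc
  subst hn
  cases l with
  | nil => exact ⟨[], by simp [walkCost, List.Chain', List.isChain_nil]⟩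
  | cons x t =>
    by_cases hx : x ∈ t
    · obtain ⟨t1, t2, rfl⟩ := List.append_of_mem hx
      have hsuf : (x :: t2) <:+ (x :: (t1 ++ x :: t2)) := by
        refine ⟨x :: t1, by simp⟩
      have hlen : (x :: t2).length < (x :: (t1 ++ x :: t2)).length := by
        simp
      obtain ⟨l', h1, h2, h3, h4, h5, h6⟩ := ih _ hlen (x :: t2) rfl (hc.suffix hsuf)
      refine ⟨l', h1, by simpa using h2, ?_, h4, ?_, ?_⟩
      · rw [h3, show x :: (t1 ++ x :: t2) = (x :: t1) ++ (x :: t2) from by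
          rw [List.cons_append]]
        rw [List.getLast?_append_of_ne_nil _ (by simp)]
      · intro y hy
        have := h5 y hy
        simp only [List.mem_cons, List.mem_append] at this ⊢
        tauto
      · refine le_trans h6 ?_
        have heq : walkCost w (x :: (t1 ++ x :: t2))
            = cost2 w x t1 + (w ((x :: t1).getLast (by simp)) x + cost2 w x t2) := by
          rw [walkCost_cons, cost2_append]; simp [cost2]
        have h1' : 0 ≤ cost2 w x t1 := cost2_nonneg hw _ _
        have h2' : 0 ≤ w ((x :: t1).getLast (by simp)) x := hw _ _
        rw [heq, walkCost_cons]
        linarith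
    · cases t with
      | nil => exact ⟨[x], by simp [walkCost, List.Chain', List.isChain_singleton]⟩
      | cons b r =>
        obtain ⟨l', h1, h2, h3, h4, h5, h6⟩ := ih (b :: r).length (by simp) (b :: r) rfl hc.tail
        have hne' : l' ≠ [] := by
          intro hemp
          rw [hemp] at h3
          have : (b :: r).getLast?.isSome = true := List.getLast?_isSome.mpr (by simp)
          rw [← h3] at this
          simp at this
        refine ⟨x :: l', ?_, by simp, ?_, ?_, ?_, ?_⟩
        · rw [List.Chain', List.isChain_cons]
          refine ⟨?_, h1⟩
          intro y hy
          rw [h2] at hy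
          simp only [List.head?_cons, Option.mem_def, Option.some_inj] at hy
          subst hy
          exact hc.rel_head
        · obtain ⟨b', r', rfl⟩ := List.exists_cons_of_ne_nil hne'
          rw [List.getLast?_cons_cons, h3]
          exact List.getLast?_cons_cons.symm
        · refine List.nodup_cons.mpr ⟨?_, h4⟩
          intro hmem
          exact hx (h5 x hmem)
        · intro y hy
          rcases List.mem_cons.mp hy with rfl | hy
          · simp
          · simp [h5 y hy]
        · have hb : l'.head? = some b := by simpa using h2
          obtain ⟨b', r', rfl⟩ := List.exists_cons_of_ne_nil hne'
          simp only [List.head?_cons, Option.some_inj] at hb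
          subst hb
          simp only [walkCost]
          linarith

end WalkBasics

section Dist

variable {V : Type} {A : V → V → Prop} {w : V → V → ℝ}

lemma graphDist_le (hw : ∀ a b, 0 ≤ w a b) {a b : V} {l : List V} (h : IsWalk A a b l) :
    graphDist A w a b ≤ walkCost w l := by
  apply csInf_le
  · exact ⟨0, fun c ⟨l', hl', hc⟩ => hc ▸ walkCost_nonneg hw l'⟩
  · exact ⟨l, h, rfl⟩

lemma graphDist_nonneg (hw : ∀ a b, 0 ≤ w a b) {a b : V} (hne : ∃ l, IsWalk A a b l) :
    0 ≤ graphDist A w a b := by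
  apply le_csInf
  · obtain ⟨l, hl⟩ := hne; exact ⟨_, l, hl, rfl⟩
  · rintro c ⟨l', _, rfl⟩; exact walkCost_nonneg hw l'

lemma isWalk_singleton (a : V) : IsWalk A a a [a] := by
  refine ⟨List.isChain_singleton a, rfl, rfl⟩

lemma graphDist_self (hw : ∀ a b, 0 ≤ w a b) (a : V) : graphDist A w a a = 0 :=
  le_antisymm (by simpa [walkCost] using graphDist_le hw (isWalk_singleton a))
    (graphDist_nonneg hw ⟨[a], isWalk_singleton a⟩)

lemma graphDist_attained [Fintype V] (hw : ∀ a b, 0 ≤ w a b) {a b : V}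
    (hne : ∃ l, IsWalk A a b l) :
    ∃ l, IsWalk A a b l ∧ l.Nodup ∧ walkCost w l = graphDist A w a b := by
  classical
  set S' : Set (List V) := {l | IsWalk A a b l ∧ l.Nodup} with hS'
  have hS'fin : S'.Finite := by
    apply (List.finite_length_le V (Fintype.card V)).subset
    rintro l ⟨-, hnd⟩
    exact hnd.length_le_card
  have hS'ne : S'.Nonempty := by
    obtain ⟨l, hc, hh, hl⟩ := hne
    obtain ⟨l', h1, h2, h3, h4, -, -⟩ := exists_nodup_walk hw l hc
    exact ⟨l', ⟨h1, h2.trans hh, h3.trans hl⟩, h4⟩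
  set C' : Set ℝ := walkCost w '' S' with hC'
  have hC'fin : C'.Finite := hS'fin.image _
  have hC'ne : C'.Nonempty := hS'ne.image _
  obtain ⟨l0, hl0S, hl0c⟩ := (hC'ne.csInf_mem hC'fin)
  refine ⟨l0, hl0S.1, hl0S.2, le_antisymm ?_ (graphDist_le hw hl0S.1)⟩
  rw [hl0c]
  apply le_csInf
  · obtain ⟨l, hl⟩ := hne; exact ⟨_, l, hl, rfl⟩
  · rintro c ⟨l, hl, rfl⟩
    obtain ⟨l', h1, h2, h3, h4, -, h6⟩ := exists_nodup_walk hw l hl.1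
    have hmem : walkCost w l' ∈ C' :=
      ⟨l', ⟨⟨h1, h2.trans hl.2.1, h3.trans hl.2.2⟩, h4⟩, rfl⟩
    exact le_trans (csInf_le hC'fin.bddBelow hmem) h6

lemma graphDist_step [Fintype V] (hw : ∀ a b, 0 ≤ w a b) {a b c : V}
    (hne : ∃ l, IsWalk A a b l) (hbc : A b c) :
    graphDist A w a c ≤ graphDist A w a b + w b c := by
  obtain ⟨l, hl, -, hcost⟩ := graphDist_attained hw hne
  have hwalk := isWalk_append_last hl hbc
  have := graphDist_le hw hwalk
  obtain ⟨hne', hlast⟩ := getLast?_eq_some_iff.mp hl.2.2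
  rw [walkCost_append_last l hne' c, hlast, hcost] at this
  exact this

end Dist

section Tree

variable {V : Type} [DecidableEq V] {v0 : V}

lemma ArbTree.cycle_eq_root (T : ArbTree V v0) {v : V} {k : ℕ} (hk : 0 < k)
    (h : T.parent^[k] v = v) : v = v0 := by
  obtain ⟨m, hm⟩ := T.reaches v
  have hmul : ∀ t, T.parent^[t * k] v = v := by
    intro t
    induction t with
    | zero => simp
    | succ t iht => rw [Nat.succ_mul, Function.iterate_add_apply, h, iht]
  have hfix : ∀ j, T.parent^[j] v0 = v0 := fun j => Function.iterate_fixed T.root_fix j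
  have hge : m ≤ m * k := Nat.le_mul_of_pos_right m hk
  have : T.parent^[m * k] v = v0 := by
    rw [show m * k = (m * k - m) + m from (Nat.sub_add_cancel hge).symm,
      Function.iterate_add_apply, hm, hfix]
  rw [hmul m] at this
  exact this

/-- Adjacency relation of the tree (undirected edges between parent and child). -/
def treeAdj (T : ArbTree V v0) : V → V → Prop :=
  fun x y => (T.parent y = x ∧ y ≠ v0) ∨ (T.parent x = y ∧ x ≠ v0)

lemma treeAdj_symm (T : ArbTree V v0) {x y : V} (h : treeAdj T x y) : treeAdj T y x := by
  rcases h with h | h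
  · exact Or.inr h
  · exact Or.inl h

lemma ArbTree.depth_spec (T : ArbTree V v0) (v : V) : T.parent^[T.depth v] v = v0 :=
  Nat.find_spec (T.reaches v)

lemma ArbTree.depth_min (T : ArbTree V v0) {v : V} {m : ℕ} (hm : m < T.depth v) :
    T.parent^[m] v ≠ v0 :=
  Nat.find_min (T.reaches v) hm

/-- The chain from a vertex up to the root. -/
def chainToRoot {V : Type} {v0 : V} (T : ArbTree V v0) : ℕ → V → List V
  | 0, a => [a]
  | n+1, a => a :: chainToRoot T n (T.parent a)

lemma chainToRoot_walk (T : ArbTree V v0) :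
    ∀ (n : ℕ) (a : V), T.parent^[n] a = v0 → (∀ m < n, T.parent^[m] a ≠ v0) →
      IsWalk (treeAdj T) a v0 (chainToRoot T n a) := by
  intro n
  induction n with
  | zero => intro a h _; rw [show a = v0 from h]; exact isWalk_singleton v0
  | succ n ih =>
      intro a h hmin
      have ha : a ≠ v0 := by simpa using hmin 0 (Nat.succ_pos n)
      have hstep : T.parent^[n] (T.parent a) = v0 := by
        rw [← Function.iterate_succ_apply]; exact h
      have hmin' : ∀ m < n, T.parent^[m] (T.parent a) ≠ v0 := by
        intro m hm
        rw [← Function.iterate_succ_apply]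
        exact hmin (m+1) (by omega)
      obtain ⟨hc, hh, hl⟩ := ih (T.parent a) hstep hmin'
      refine ⟨?_, rfl, ?_⟩
      · show List.Chain' (treeAdj T) (a :: chainToRoot T n (T.parent a))
        rw [List.Chain', List.isChain_cons]
        refine ⟨?_, hc⟩
        intro y hy
        rw [hh] at hy
        simp only [Option.mem_def, Option.some_inj] at hy
        subst hy
        exact Or.inr ⟨rfl, ha⟩
      · rw [show chainToRoot T (n+1) a = a :: chainToRoot T n (T.parent a) from rfl]
        have : chainToRoot T n (T.parent a) ≠ [] := by
          intro hemp; rw [hemp] at hh; simp at hh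
        obtain ⟨b', r', heq⟩ := List.exists_cons_of_ne_nil this
        rw [heq] at hl ⊢
        rw [List.getLast?_cons_cons]
        exact hl

lemma exists_treeWalk_from_root (T : ArbTree V v0) (a : V) :
    ∃ l, IsWalk (treeAdj T) v0 a l := by
  obtain ⟨l, hl⟩ : ∃ l, IsWalk (treeAdj T) a v0 l :=
    ⟨chainToRoot T (T.depth a) a,
      chainToRoot_walk T (T.depth a) a (T.depth_spec a) (fun m hm => T.depth_min hm)⟩
  exact ⟨l.reverse, isWalk_reverse (fun x y => treeAdj_symm T) hl⟩

end Tree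

section Exists

variable {V : Type} [DecidableEq V] {v0 : V} {Adj : V → V → Prop}

lemma exists_spanning_tree (hsym : ∀ a b, Adj a b → Adj b a)
    (hconn : ∀ a b, ∃ l, IsWalk Adj a b l) :
    ∃ T : ArbTree V v0, IsSpanning Adj T := by
  classical
  have Q : ∀ v : V, ∃ n, ∃ l, IsWalk Adj v v0 l ∧ l.length = n := by
    intro v; obtain ⟨l, hl⟩ := hconn v v0; exact ⟨l.length, l, hl, rfl⟩
  let N : V → ℕ := fun v => Nat.find (Q v)
  have key : ∀ v, v ≠ v0 → ∃ u, Adj v u ∧ N u < N v := by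
    intro v hv
    obtain ⟨l, hl, hlen⟩ := Nat.find_spec (Q v)
    obtain ⟨hc, hh, hla⟩ := hl
    have hne : l ≠ [] := by intro h; rw [h] at hh; simp at hh
    obtain ⟨a, t, rfl⟩ := List.exists_cons_of_ne_nil hne
    simp only [List.head?_cons, Option.some_inj] at hh
    subst a
    cases t with
    | nil => simp only [List.getLast?_singleton, Option.some_inj] at hla; exact absurd hla hv
    | cons x r =>
        refine ⟨x, hc.rel_head, ?_⟩
        have hwalk : IsWalk Adj x v0 (x :: r) :=
          ⟨hc.tail, rfl, by rw [← List.getLast?_cons_cons (a := v)]; exact hla⟩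
        have h1 : N x ≤ (x :: r).length := Nat.find_le ⟨x :: r, hwalk, rfl⟩
        have h2 : (v :: x :: r).length = N v := hlen
        simp only [List.length_cons] at h1 h2
        omega
  choose u hu hlt using key
  let f : V → V := fun v => if h : v = v0 then v0 else u v h
  have hfv : ∀ (v) (hv : v ≠ v0), f v = u v hv := fun v hv => dif_neg hv
  have hroot : f v0 = v0 := dif_pos rfl
  have hreach : ∀ (k : ℕ) (v : V), N v ≤ k → ∃ n, f^[n] v = v0 := by
    intro k
    induction k with
    | zero =>
        intro v hNv
        by_cases h : v = v0
        · exact ⟨0, h⟩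
        · exact absurd (hlt v h) (by omega)
    | succ k ihk =>
        intro v hNv
        by_cases h : v = v0
        · exact ⟨0, h⟩
        · obtain ⟨n, hn⟩ := ihk (u v h) (by have := hlt v h; omega)
          refine ⟨n + 1, ?_⟩
          rw [Function.iterate_succ_apply, hfv v h]
          exact hn
  refine ⟨⟨f, hroot, fun v => hreach (N v) v le_rfl⟩, ?_⟩
  intro v hv
  show Adj (f v) v
  rw [hfv v hv]
  exact hsym _ _ (hu v hv)

end Exists

section MST

lemma mst_attained {V : Type} [Fintype V] [DecidableEq V] {v0 : V} {Adj : V → V → Prop}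
    (w : V → V → ℝ) (hsym : ∀ a b, Adj a b → Adj b a)
    (hconn : ∀ a b, ∃ l, IsWalk Adj a b l) :
    ∃ TM : ArbTree V v0, IsSpanning Adj TM ∧
      treeCost TM w = sInf {c | ∃ T' : ArbTree V v0, IsSpanning Adj T' ∧ treeCost T' w = c} := by
  classical
  set S : Set ℝ := {c | ∃ T' : ArbTree V v0, IsSpanning Adj T' ∧ treeCost T' w = c} with hS
  have hSne : S.Nonempty := by
    obtain ⟨T, hT⟩ := exists_spanning_tree hsym hconn
    exact ⟨treeCost T w, T, hT, rfl⟩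
  have hSfin : S.Finite := by
    apply Set.Finite.subset (Set.finite_range
      (fun p : V → V => ∑ v ∈ Finset.univ.filter (· ≠ v0), w (p v) v))
    rintro c ⟨T', -, rfl⟩
    exact ⟨T'.parent, rfl⟩
  obtain ⟨T', hT', hc⟩ := hSne.csInf_mem hSfin
  exact ⟨T', hT', hc⟩

end MST

section Euler

variable {V : Type} [Fintype V] [DecidableEq V] {v0 : V}

open Finset in
/-- Descendants of `v` in the tree (including `v`). -/
noncomputable def desc (T : ArbTree V v0) (v : V) : Finset V :=
  Finset.univ.filter (fun u => ∃ n ≤ T.depth u, T.parent^[n] u = v)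

open Finset in
/-- Children of `v` in the tree. -/
noncomputable def children (T : ArbTree V v0) (v : V) : Finset V :=
  Finset.univ.filter (fun c => T.parent c = v ∧ c ≠ v0)

variable (T : ArbTree V v0)

lemma mem_desc {u v : V} : u ∈ desc T v ↔ ∃ n ≤ T.depth u, T.parent^[n] u = v := by
  simp [desc]

lemma self_mem_desc (v : V) : v ∈ desc T v := mem_desc T |>.mpr ⟨0, Nat.zero_le _, rfl⟩

lemma mem_children {c v : V} : c ∈ children T v ↔ T.parent c = v ∧ c ≠ v0 := by
  simp [children]

lemma desc_subset_of_child {c v : V} (hc : c ∈ children T v) : desc T c ⊆ desc T v := by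
  obtain ⟨hpc, hc0⟩ := mem_children T |>.mp hc
  intro u hu
  obtain ⟨n, hn, hpn⟩ := mem_desc T |>.mp hu
  have hlt : n < T.depth u := by
    rcases Nat.lt_or_ge n (T.depth u) with h | h
    · exact h
    · exfalso
      have : n = T.depth u := le_antisymm hn h
      rw [this, T.depth_spec] at hpn
      exact hc0 hpn.symm
  refine mem_desc T |>.mpr ⟨n + 1, hlt, ?_⟩
  rw [Function.iterate_succ_apply', hpn, hpc]

lemma not_self_mem_desc_child {c v : V} (hc : c ∈ children T v) : v ∉ desc T c := by
  obtain ⟨hpc, hc0⟩ := mem_children T |>.mp hc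
  intro hv
  obtain ⟨n, hn, hpn⟩ := mem_desc T |>.mp hv
  cases n with
  | zero =>
      simp only [Function.iterate_zero, id] at hpn
      have hpcc : T.parent c = c := by rw [hpc, hpn]
      have : T.parent^[1] c = c := by simpa using hpcc
      exact hc0 (T.cycle_eq_root Nat.one_pos this)
  | succ m =>
      have hcyc : T.parent^[m + 2] v = v := by
        rw [show m + 2 = 1 + (m+1) from by omega, Function.iterate_add_apply, hpn]
        simpa using hpc
      have hv0 : v = v0 := T.cycle_eq_root (by omega) hcyc
      have : c = v0 := by
        rw [← hpn, hv0]
        exact Function.iterate_fixed T.root_fix _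
      exact hc0 this

lemma desc_card_lt {c v : V} (hc : c ∈ children T v) :
    (desc T c).card < (desc T v).card := by
  apply Finset.card_lt_card
  refine ⟨desc_subset_of_child T hc, ?_⟩
  intro hsub
  exact not_self_mem_desc_child T hc (hsub (self_mem_desc T v))

lemma desc_disjoint {c c' v : V} (hc : c ∈ children T v) (hc' : c' ∈ children T v)
    (hne : c ≠ c') : Disjoint (desc T c) (desc T c') := by
  have key : ∀ (x y : V), x ∈ children T v → y ∈ children T v → x ≠ y →
      ∀ (u : V) (n n' : ℕ), n ≤ n' → n ≤ T.depth u → n' ≤ T.depth u →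
      T.parent^[n] u = x → T.parent^[n'] u = y → False := by
    intro x y hx hy hxy u n n' hle hn hn' hpx hpy
    obtain ⟨hpx', hx0⟩ := mem_children T |>.mp hx
    obtain ⟨hpy', hy0⟩ := mem_children T |>.mp hy
    rcases Nat.eq_or_lt_of_le hle with rfl | hlt
    · exact hxy (hpx.symm.trans hpy)
    · set m := n' - n with hm
      have hm1 : 1 ≤ m := by omega
      have h1 : T.parent^[m] x = y := by
        rw [← hpx, ← Function.iterate_add_apply]
        rw [show m + n = n' from by omega]
        exact hpy
      have h2 : T.parent^[m-1] v = y := by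
        rw [show m = m - 1 + 1 from by omega] at h1
        rw [Function.iterate_succ_apply, hpx'] at h1
        exact h1
      have h3 : T.parent^[m] v = v := by
        rw [show m = (m-1) + 1 from by omega, Function.iterate_succ_apply', h2, hpy']
      have hv0 : v = v0 := T.cycle_eq_root (by omega) h3
      apply hy0
      rw [← h2, hv0]
      exact Function.iterate_fixed T.root_fix _
  rw [Finset.disjoint_left]
  intro u hu hu'
  obtain ⟨n, hn, hpn⟩ := mem_desc T |>.mp hu
  obtain ⟨n', hn', hpn'⟩ := mem_desc T |>.mp hu'
  rcases le_total n n' with h | h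
  · exact key c c' hc hc' hne u n n' h hn hn' hpn hpn'
  · exact key c' c hc' hc hne.symm u n' n h hn' hn hpn' hpn

lemma biUnion_desc_subset (v : V) :
    (children T v).biUnion (desc T) ⊆ (desc T v).erase v := by
  intro u hu
  obtain ⟨c, hc, huc⟩ := Finset.mem_biUnion.mp hu
  refine Finset.mem_erase.mpr ⟨?_, desc_subset_of_child T hc huc⟩
  intro rfl'
  subst rfl'
  exact not_self_mem_desc_child T hc huc

lemma mem_desc_child {u v : V} (hu : u ∈ desc T v) (hne : u ≠ v) :
    ∃ c ∈ children T v, u ∈ desc T c := by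
  obtain ⟨n, hn, hpn⟩ := mem_desc T |>.mp hu
  cases n with
  | zero => exact absurd hpn hne
  | succ m =>
      have hm : m < T.depth u := by omega
      refine ⟨T.parent^[m] u, ?_, ?_⟩
      · refine mem_children T |>.mpr ⟨?_, T.depth_min hm⟩
        have hit := Function.iterate_succ_apply' T.parent m u
        rw [← hit]
        exact hpn
      · exact mem_desc T |>.mpr ⟨m, le_of_lt hm, rfl⟩

lemma desc_root : desc T v0 = Finset.univ := by
  ext u
  simp only [Finset.mem_univ, iff_true]
  exact mem_desc T |>.mpr ⟨T.depth u, le_rfl, T.depth_spec u⟩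

/-- Euler tour of the subtree rooted at `v`. -/
noncomputable def euler (T : ArbTree V v0) (v : V) : List V :=
  v :: ((children T v).attach.toList.flatMap fun c => euler T c.1 ++ [v])
termination_by (desc T v).card
decreasing_by exact desc_card_lt T c.2

lemma getLast_cons_of_getLast? {l : List V} {x : V} (h : l.getLast? = some x) (a : V) :
    (a :: l).getLast (by simp) = x := by
  obtain ⟨hne, rfl⟩ := getLast?_eq_some_iff.mp h
  exact List.getLast_cons hne

variable {w : V → V → ℝ}

lemma getLast?_cons_eq {l : List V} {x : V} (h : l.getLast? = some x) (a : V) :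
    (a :: l).getLast? = some x := by
  rw [List.getLast?_eq_getLast (by simp)]
  exact congrArg some (getLast_cons_of_getLast? h a)

lemma euler_glue (hwsym : ∀ a b, w a b = w b a) (v : V)
    (cs : List {c // c ∈ children T v})
    (H : ∀ c ∈ cs, (euler T c.1).head? = some c.1 ∧ (euler T c.1).getLast? = some c.1 ∧
      List.Chain' (treeAdj T) (euler T c.1)) :
    List.Chain' (treeAdj T) (v :: cs.flatMap (fun c => euler T c.1 ++ [v])) ∧
    (v :: cs.flatMap (fun c => euler T c.1 ++ [v])).getLast? = some v ∧
    cost2 w v (cs.flatMap (fun c => euler T c.1 ++ [v])) =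
      (cs.map (fun c => 2 * w (T.parent c.1) c.1 + walkCost w (euler T c.1))).sum := by
  induction cs with
  | nil => exact ⟨List.isChain_singleton v, rfl, rfl⟩
  | cons c cs' ih =>
      obtain ⟨ihc, ihl, ihcost⟩ := ih (fun x hx => H x (List.mem_cons_of_mem c hx))
      obtain ⟨hch, hcl, hcc⟩ := H c (List.mem_cons_self)
      obtain ⟨hpc, hc0⟩ := mem_children T |>.mp c.2
      have hEne : euler T c.1 ≠ [] := by
        intro h; rw [h] at hch; simp at hch
      set B : List V := cs'.flatMap (fun c => euler T c.1 ++ [v]) with hB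
      have hsplit : v :: (c :: cs').flatMap (fun c => euler T c.1 ++ [v])
          = (v :: (euler T c.1 ++ [v])) ++ B := by
        rw [List.flatMap_cons, ← hB, List.cons_append, List.append_assoc]
      have hAlast : (v :: (euler T c.1 ++ [v])).getLast? = some v :=
        getLast?_cons_eq (List.getLast?_concat) v
      have hAchain : List.Chain' (treeAdj T) (v :: (euler T c.1 ++ [v])) := by
        rw [show v :: (euler T c.1 ++ [v]) = (v :: euler T c.1) ++ [v] from rfl,
          List.Chain', List.isChain_append]
        refine ⟨?_, List.isChain_singleton v, ?_⟩
        · rw [List.isChain_cons]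
          refine ⟨?_, hcc⟩
          intro y hy
          rw [hch] at hy
          simp only [Option.mem_def, Option.some_inj] at hy
          subst hy
          exact Or.inl ⟨hpc, hc0⟩
        · intro x hx y hy
          simp only [List.head?_cons, Option.mem_def, Option.some_inj] at hy
          subst hy
          rw [getLast?_cons_eq hcl v] at hx
          simp only [Option.mem_def, Option.some_inj] at hx
          subst hx
          exact Or.inr ⟨hpc, hc0⟩
      have hBchain : List.Chain' (treeAdj T) B := ihc.tail
      have hvB : ∀ y ∈ B.head?, treeAdj T v y := (List.isChain_cons.mp ihc).1
      refine ⟨?_, ?_, ?_⟩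
      · rw [hsplit, List.Chain', List.isChain_append]
        refine ⟨hAchain, hBchain, ?_⟩
        intro x hx y hy
        rw [hAlast] at hx
        simp only [Option.mem_def, Option.some_inj] at hx
        subst hx
        exact hvB y hy
      · rw [hsplit]
        by_cases hBnil : B = []
        · rw [hBnil, List.append_nil]; exact hAlast
        · rw [List.getLast?_append_of_ne_nil _ hBnil]
          obtain ⟨x, t, hxt⟩ := List.exists_cons_of_ne_nil hBnil
          rw [hxt] at ihl ⊢
          rw [List.getLast?_cons_cons] at ihl
          exact ihl
      · rw [List.flatMap_cons, ← hB, cost2_append]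
        have hg1 : (v :: (euler T c.1 ++ [v])).getLast (by simp) = v :=
          getLast_cons_of_getLast? (List.getLast?_concat) v
        rw [hg1, ihcost, cost2_append]
        have hg2 : (v :: euler T c.1).getLast (by simp) = c.1 :=
          getLast_cons_of_getLast? hcl v
        rw [hg2]
        obtain ⟨x, tc, hxtc⟩ := List.exists_cons_of_ne_nil hEne
        have hx : x = c.1 := by
          rw [hxtc] at hch; simpa using hch
        subst hx
        rw [hxtc]
        simp only [cost2, List.map_cons, List.sum_cons]
        rw [← walkCost_cons, ← hxtc, hpc]
        have hs := hwsym c.1 v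
        linarith

lemma euler_spec (hw : ∀ a b, 0 ≤ w a b) (hwsym : ∀ a b, w a b = w b a) :
    ∀ (n : ℕ) (v : V), (desc T v).card ≤ n →
      (euler T v).head? = some v ∧ (euler T v).getLast? = some v ∧
      List.Chain' (treeAdj T) (euler T v) ∧ (∀ u ∈ desc T v, u ∈ euler T v) ∧
      walkCost w (euler T v) ≤ 2 * ∑ u ∈ (desc T v).erase v, w (T.parent u) u := by
  intro n
  induction n with
  | zero =>
      intro v hcard
      exfalso
      have : 0 < (desc T v).card := Finset.card_pos.mpr ⟨v, self_mem_desc T v⟩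
      omega
  | succ n ih =>
      intro v hcard
      have IH : ∀ c ∈ children T v, (euler T c).head? = some c ∧
          (euler T c).getLast? = some c ∧ List.Chain' (treeAdj T) (euler T c) ∧
          (∀ u ∈ desc T c, u ∈ euler T c) ∧
          walkCost w (euler T c) ≤ 2 * ∑ u ∈ (desc T c).erase c, w (T.parent u) u := by
        intro c hc
        exact ih c (by have := desc_card_lt T hc; omega)
      have hunf : euler T v = v :: ((children T v).attach.toList.flatMap
          fun c => euler T c.1 ++ [v]) := by
        rw [euler]
      obtain ⟨hchain, hlast, hcost⟩ := euler_glue T hwsym v (children T v).attach.toList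
        (fun c _ => ⟨(IH c.1 c.2).1, (IH c.1 c.2).2.1, (IH c.1 c.2).2.2.1⟩)
      rw [hunf]
      refine ⟨rfl, hlast, hchain, ?_, ?_⟩
      · intro u hu
        by_cases huv : u = v
        · subst huv; exact List.mem_cons_self
        · obtain ⟨c, hc, huc⟩ := mem_desc_child T hu huv
          have humem : u ∈ euler T c := (IH c hc).2.2.2.1 u huc
          apply List.mem_cons_of_mem
          apply List.mem_flatMap.mpr
          refine ⟨⟨c, hc⟩, ?_, List.mem_append_left _ humem⟩
          exact Finset.mem_toList.mpr (Finset.mem_attach _ _)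
      · rw [walkCost_cons, hcost]
        have hbound : ∀ c : {c // c ∈ children T v},
            2 * w (T.parent c.1) c.1 + walkCost w (euler T c.1)
              ≤ 2 * ∑ u ∈ desc T c.1, w (T.parent u) u := by
          intro c
          have h1 := (IH c.1 c.2).2.2.2.2
          have h2 : ∑ u ∈ (desc T c.1).erase c.1, w (T.parent u) u + w (T.parent c.1) c.1
              = ∑ u ∈ desc T c.1, w (T.parent u) u :=
            Finset.sum_erase_add _ _ (self_mem_desc T c.1)
          linarith
        calc ((children T v).attach.toList.map
              (fun c => 2 * w (T.parent c.1) c.1 + walkCost w (euler T c.1))).sum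
            ≤ ((children T v).attach.toList.map
              (fun c => 2 * ∑ u ∈ desc T c.1, w (T.parent u) u)).sum :=
              List.sum_le_sum (fun c _ => hbound c)
          _ = ∑ c ∈ (children T v).attach, 2 * ∑ u ∈ desc T c.1, w (T.parent u) u :=
              Finset.sum_map_toList _ _
          _ = ∑ c ∈ children T v, 2 * ∑ u ∈ desc T c, w (T.parent u) u :=
              Finset.sum_attach (children T v)
                (fun c => 2 * ∑ u ∈ desc T c, w (T.parent u) u)
          _ = 2 * ∑ c ∈ children T v, ∑ u ∈ desc T c, w (T.parent u) u := by
              rw [Finset.mul_sum]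
          _ = 2 * ∑ u ∈ (children T v).biUnion (desc T), w (T.parent u) u := by
              rw [Finset.sum_biUnion]
              intro x hx y hy hxy
              exact desc_disjoint T (by simpa using hx) (by simpa using hy) hxy
          _ ≤ 2 * ∑ u ∈ (desc T v).erase v, w (T.parent u) u := by
              have := Finset.sum_le_sum_of_subset_of_nonneg (biUnion_desc_subset T v)
                (f := fun u => w (T.parent u) u) (fun i _ _ => hw _ _)
              linarith

end Euler

section BPS

variable {V : Type}

/-- Greedy breakpoint selection along a tour. -/
noncomputable def bps (w : V → V → ℝ) (d : V → ℝ) (α : ℝ) : List V → ℝ → List V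
  | [], _ => []
  | [z], D => if α * d z < D then [z] else []
  | z :: z' :: r, D =>
      if α * d z < D then z :: bps w d α (z' :: r) (d z + w z z')
      else bps w d α (z' :: r) (D + w z z')

variable {w : V → V → ℝ} {d : V → ℝ} {α : ℝ}

lemma bps_nil (D : ℝ) : bps w d α [] D = [] := by rw [bps]

lemma bps_single (z : V) (D : ℝ) :
    bps w d α [z] D = if α * d z < D then [z] else [] := by rw [bps]

lemma bps_cons2 (z z' : V) (r : List V) (D : ℝ) :
    bps w d α (z :: z' :: r) D =
      if α * d z < D then z :: bps w d α (z' :: r) (d z + w z z')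
      else bps w d α (z' :: r) (D + w z z') := by rw [bps]

/-- Telescoping bound on the distances of the breakpoints. -/
lemma bps_sum (hα : 1 < α) (hd : ∀ v, 0 ≤ d v) (hw : ∀ a b, 0 ≤ w a b) :
    ∀ (l : List V) (D : ℝ), 0 ≤ D →
      (α - 1) * ((bps w d α l D).map d).sum ≤ D + walkCost w l := by
  intro l
  induction l with
  | nil => intro D hD; simp [bps_nil, walkCost, hD]
  | cons z t ih =>
      cases t with
      | nil =>
          intro D hD
          rw [bps_single]
          by_cases h : α * d z < D
          · simp only [if_pos h, List.map_cons, List.map_nil, List.sum_cons,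
              List.sum_nil, walkCost]
            have := hd z
            nlinarith
          · simp only [if_neg h, List.map_nil, List.sum_nil, walkCost]
            linarith
      | cons z' r =>
          intro D hD
          rw [bps_cons2]
          by_cases h : α * d z < D
          · simp only [if_pos h, List.map_cons, List.sum_cons, walkCost]
            have hih := ih (d z + w z z') (add_nonneg (hd z) (hw z z'))
            have := hd z
            nlinarith
          · simp only [if_neg h, walkCost]
            have hih := ih (D + w z z') (add_nonneg hD (hw z z'))
            linarith

/-- The covering property: every tour vertex is within `α`-factor via the subgraph. -/
lemma bps_cover {A : V → V → Prop} (f : V → ℝ) (hα : 1 < α) (hd : ∀ v, 0 ≤ d v)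
    (hstep : ∀ a b, A a b → f b ≤ f a + w a b) :
    ∀ (l : List V) (D : ℝ), l.Chain' A →
      (∀ b ∈ bps w d α l D, f b ≤ d b) →
      (∀ x ∈ l.head?, f x ≤ D) →
      ∀ z ∈ l, f z ≤ α * d z := by
  intro l
  induction l with
  | nil => intro D _ _ _ z hz; simp at hz
  | cons z t ih =>
      cases t with
      | nil =>
          intro D hc hbp hhd z' hz'
          simp only [List.mem_singleton] at hz'
          subst hz'
          have hfz : f z' ≤ D := hhd z' rfl
          by_cases h : α * d z' < D
          · have : f z' ≤ d z' := hbp z' (by rw [bps_single, if_pos h]; simp)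
            nlinarith [hd z']
          · push_neg at h
            linarith
      | cons z2 r =>
          intro D hc hbp hhd y hy
          have hfz : f z ≤ D := hhd z rfl
          have hA : A z z2 := hc.rel_head
          by_cases h : α * d z < D
          · have hfz' : f z ≤ d z := hbp z (by rw [bps_cons2, if_pos h]; simp)
            rcases List.mem_cons.mp hy with rfl | hy'
            · nlinarith [hd y]
            · refine ih (d z + w z z2) hc.tail ?_ ?_ y hy'
              · intro b hb
                exact hbp b (by rw [bps_cons2, if_pos h]; exact List.mem_cons_of_mem _ hb)
              · intro x hx
                simp only [List.head?_cons, Option.mem_def, Option.some_inj] at hx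
                subst hx
                have := hstep z z2 hA
                linarith
          · push_neg at h
            rcases List.mem_cons.mp hy with rfl | hy'
            · linarith
            · refine ih (D + w z z2) hc.tail ?_ ?_ y hy'
              · intro b hb
                exact hbp b (by rw [bps_cons2, if_neg (not_lt.mpr h)]; exact hb)
              · intro x hx
                simp only [List.head?_cons, Option.mem_def, Option.some_inj] at hx
                subst hx
                have := hstep z z2 hA
                linarith

end BPS

section Edges

variable {V : Type} [DecidableEq V]

lemma list_toFinset_sum_le {β : Type} [DecidableEq β] (f : β → ℝ) (hf : ∀ b, 0 ≤ f b) :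
    ∀ L : List β, ∑ x ∈ L.toFinset, f x ≤ (L.map f).sum := by
  intro L
  induction L with
  | nil => simp
  | cons x t ih =>
      rw [List.toFinset_cons, List.map_cons, List.sum_cons]
      by_cases hx : x ∈ t.toFinset
      · rw [Finset.insert_eq_self.mpr hx]
        linarith [hf x]
      · rw [Finset.sum_insert hx]
        linarith

lemma sum_union_le {β : Type} [DecidableEq β] (f : β → ℝ) (hf : ∀ b, 0 ≤ f b)
    (s t : Finset β) : ∑ x ∈ s ∪ t, f x ≤ ∑ x ∈ s, f x + ∑ x ∈ t, f x := by
  have h := Finset.sum_union_inter (s₁ := s) (s₂ := t) (f := f)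
  have h2 : 0 ≤ ∑ x ∈ s ∩ t, f x := Finset.sum_nonneg (fun i _ => hf i)
  linarith

/-- The set of (undirected) edges of a walk. -/
def edgeFinset (l : List V) : Finset (Sym2 V) :=
  ((l.zip l.tail).map fun p => s(p.1, p.2)).toFinset

lemma sum_edgeFinset_le {w : V → V → ℝ} (hw : ∀ a b, 0 ≤ w a b)
    (hwsym : ∀ a b, w a b = w b a) (l : List V) :
    ∑ e ∈ edgeFinset l, Sym2.lift ⟨w, hwsym⟩ e ≤ walkCost w l := by
  have hWnn : ∀ e : Sym2 V, 0 ≤ Sym2.lift ⟨w, hwsym⟩ e := by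
    intro e
    induction e with
    | _ a b => simpa using hw a b
  refine le_trans (list_toFinset_sum_le _ hWnn _) ?_
  rw [walkCost_eq_zip_sum, List.map_map]
  apply le_of_eq
  congr 1

end Edges

section SPT

variable {V : Type} [Fintype V] [DecidableEq V] {v0 : V}

lemma spt_exists (A : V → V → Prop) (w : V → V → ℝ) (hw : ∀ a b, 0 ≤ w a b)
    (hne : ∀ v, ∃ l, IsWalk A v0 v l) :
    ∃ T : ArbTree V v0, (∀ v, v ≠ v0 → A (T.parent v) v) ∧
      (∀ v, recCost T w v ≤ graphDist A w v0 v) := by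
  classical
  set dist : V → ℝ := fun v => graphDist A w v0 v with hdistdef
  have hat : ∀ v, ∃ l, IsWalk A v0 v l ∧ walkCost w l = dist v := by
    intro v
    obtain ⟨l, h1, -, h3⟩ := graphDist_attained hw (hne v)
    exact ⟨l, h1, h3⟩
  have Q : ∀ v, ∃ n, ∃ l, IsWalk A v0 v l ∧ walkCost w l = dist v ∧ l.length = n := by
    intro v
    obtain ⟨l, h1, h2⟩ := hat v
    exact ⟨l.length, l, h1, h2, rfl⟩
  set M : V → ℕ := fun v => Nat.find (Q v) with hM
  have key : ∀ v, v ≠ v0 → ∃ u, A u v ∧ dist v = dist u + w u v ∧ M u < M v := by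
    intro v hv
    obtain ⟨l, hl, hcost, hlen⟩ := Nat.find_spec (Q v)
    obtain ⟨hc, hh, hla⟩ := hl
    have hlne : l ≠ [] := by intro h; rw [h] at hh; simp at hh
    obtain ⟨a, t, rfl⟩ := List.exists_cons_of_ne_nil hlne
    simp only [List.head?_cons, Option.some_inj] at hh
    subst a
    cases t with
    | nil =>
        simp only [List.getLast?_singleton, Option.some_inj] at hla
        exact absurd hla.symm hv
    | cons b t' =>
        set l : List V := v0 :: b :: t' with hldef
        have hlne2 : l ≠ [] := by simp [hldef]
        have hvlast : l.getLast (by simp [hldef]) = v := by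
          obtain ⟨hne', hgl⟩ := getLast?_eq_some_iff.mp hla
          exact hgl
        have hsplit : l.dropLast ++ [v] = l := by
          rw [← hvlast]
          exact List.dropLast_append_getLast hlne2
        have hdlne : l.dropLast ≠ [] := by simp [hldef]
        set u : V := l.dropLast.getLast hdlne with hu
        have hdl_last : l.dropLast.getLast? = some u := List.getLast?_eq_getLast hdlne
        have hchain2 := hsplit ▸ hc
        rw [List.Chain', List.isChain_append] at hchain2
        obtain ⟨hc1, -, hcond⟩ := hchain2
        have hAuv : A u v := hcond u (by rw [hdl_last]; rfl) v rfl
        have hdl_head : l.dropLast.head? = some v0 := by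
          simp [hldef]
        have hwalk' : IsWalk A v0 u l.dropLast := ⟨hc1, hdl_head, hdl_last⟩
        have hcost_split : walkCost w l = walkCost w l.dropLast + w u v := by
          conv_lhs => rw [← hsplit]
          exact walkCost_append_last _ hdlne v
        have hdu_le : dist u ≤ walkCost w l.dropLast := graphDist_le hw hwalk'
        have hdv_le : dist v ≤ dist u + w u v := by
          obtain ⟨lu, hlu, hlucost⟩ := hat u
          have := graphDist_le hw (isWalk_append_last hlu hAuv)
          obtain ⟨hne', hgl⟩ := getLast?_eq_some_iff.mp hlu.2.2
          rw [walkCost_append_last _ hne' v, hgl, hlucost] at this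
          exact this
        have hdeq : walkCost w l.dropLast = dist u := by
          by_contra hne''
          have hlt : dist u < walkCost w l.dropLast := lt_of_le_of_ne hdu_le (Ne.symm hne'')
          have : dist v < dist v := by
            calc dist v ≤ dist u + w u v := hdv_le
              _ < walkCost w l.dropLast + w u v := by linarith
              _ = walkCost w l := hcost_split.symm
              _ = dist v := hcost
          exact absurd this (lt_irrefl _)
        refine ⟨u, hAuv, ?_, ?_⟩
        · rw [← hcost, hcost_split, hdeq]
        · have hMu : M u ≤ l.dropLast.length := Nat.find_le ⟨l.dropLast, hwalk', hdeq, rfl⟩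
          have hlen2 : l.length = M v := hlen
          have : l.dropLast.length = l.length - 1 := List.length_dropLast
          have hl2 : 2 ≤ l.length := by simp [hldef]
          omega
  choose u hAu hdu hMu using key
  set par : V → V := fun v => if h : v = v0 then v0 else u v h with hpar
  have hparv : ∀ (v) (h : v ≠ v0), par v = u v h := fun v h => dif_neg h
  have hreach : ∀ (k : ℕ) (v : V), M v ≤ k → ∃ n, par^[n] v = v0 := by
    intro k
    induction k with
    | zero =>
        intro v hv
        by_cases h : v = v0
        · exact ⟨0, h⟩
        · exact absurd (hMu v h) (by omega)
    | succ k ihk =>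
        intro v hv
        by_cases h : v = v0
        · exact ⟨0, h⟩
        · obtain ⟨n, hn⟩ := ihk (u v h) (by have := hMu v h; omega)
          exact ⟨n + 1, by rw [Function.iterate_succ_apply, hparv v h]; exact hn⟩
  set T : ArbTree V v0 := ⟨par, dif_pos rfl, fun v => hreach (M v) v le_rfl⟩ with hT
  have hTpar : ∀ (v) (h : v ≠ v0), T.parent v = u v h := hparv
  refine ⟨T, ?_, ?_⟩
  · intro v hv
    rw [hTpar v hv]
    exact hAu v hv
  · intro v
    have hterm : ∀ i < T.depth v, w (T.parent^[i+1] v) (T.parent^[i] v)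
        = dist (T.parent^[i] v) - dist (T.parent^[i+1] v) := by
      intro i hi
      have hvi : T.parent^[i] v ≠ v0 := T.depth_min hi
      have hsucc : T.parent^[i+1] v = T.parent (T.parent^[i] v) :=
        Function.iterate_succ_apply' _ _ _
      rw [hsucc, hTpar _ hvi]
      have := hdu _ hvi
      linarith
    have hsum : recCost T w v = dist v - dist (T.parent^[T.depth v] v) := by
      rw [recCost]
      rw [Finset.sum_congr rfl (fun i hi => hterm i (Finset.mem_range.mp hi))]
      rw [Finset.sum_range_sub' (fun i => dist (T.parent^[i] v)) (T.depth v)]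
      simp
    rw [hsum, T.depth_spec]
    have hd0 : dist v0 = 0 := graphDist_self hw v0
    rw [hd0]
    simp [hdistdef]

end SPT

section MoreHelpers

variable {V : Type}

lemma chain'_of_forall_zip {A : V → V → Prop} :
    ∀ (l : List V), (∀ p ∈ l.zip l.tail, A p.1 p.2) → l.Chain' A := by
  intro l
  induction l with
  | nil => intro _; exact List.isChain_nil
  | cons a t ih =>
      intro h
      cases t with
      | nil => exact List.isChain_singleton a
      | cons b r =>
          rw [List.Chain', List.isChain_cons_cons]
          refine ⟨h (a, b) (by simp), ih ?_⟩
          intro p hp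
          exact h p (by simp only [List.tail_cons, List.zip_cons_cons, List.mem_cons]; tauto)

lemma sum_biUnion_le {β γ : Type} [DecidableEq β] [DecidableEq γ] (f : β → ℝ)
    (hf : ∀ b, 0 ≤ f b) (s : Finset γ) (t : γ → Finset β) :
    ∑ x ∈ s.biUnion t, f x ≤ ∑ c ∈ s, ∑ x ∈ t c, f x := by
  induction s using Finset.induction_on with
  | empty => simp
  | insert a s' hnotmem ih =>
      rw [Finset.biUnion_insert, Finset.sum_insert hnotmem]
      refine le_trans (sum_union_le f hf _ _) ?_
      linarith

lemma parentEdge_injOn {v0 : V} [DecidableEq V] (T : ArbTree V v0) :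
    ∀ x (_ : x ≠ v0) y (_ : y ≠ v0), s(T.parent x, x) = s(T.parent y, y) → x = y := by
  intro x hx y hy heq
  rw [Sym2.eq_iff] at heq
  rcases heq with ⟨-, h2⟩ | ⟨h1, h2⟩
  · exact h2
  · exfalso
    have hcyc : T.parent^[2] x = x := by
      show T.parent (T.parent^[1] x) = x
      simp only [Function.iterate_one]
      rw [h1, ← h2]
    exact hx (T.cycle_eq_root (by omega) hcyc)

end MoreHelpers

/-- LAST: for a connected undirected weighted graph and `α > 1`, there
is a spanning tree `T` rooted at `v0` such that every vertex's tree-path weight from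
`v0` is at most `α` times its shortest-path distance, and the total weight of `T` is at
most `(1 + 2/(α-1))` times the minimum spanning tree weight. -/
theorem stmt11 {V : Type} [Fintype V] [DecidableEq V]
    (Adj : V → V → Prop) (hsym : ∀ a b, Adj a b → Adj b a)
    (w : V → V → ℝ) (hwsym : ∀ a b, w a b = w b a) (hw : ∀ a b, 0 ≤ w a b)
    (v0 : V) (hconn : ∀ a b, ∃ l, IsWalk Adj a b l)
    (α : ℝ) (hα : 1 < α) :
    ∃ T : ArbTree V v0, IsSpanning Adj T ∧
      (∀ v, recCost T w v ≤ α * graphDist Adj w v0 v) ∧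
      treeCost T w ≤ (1 + 2 / (α - 1)) *
        sInf {c | ∃ T' : ArbTree V v0, IsSpanning Adj T' ∧ treeCost T' w = c} := by
  classical
  set d : V → ℝ := fun v => graphDist Adj w v0 v with hd
  have hdnn : ∀ v, 0 ≤ d v := fun v => graphDist_nonneg hw (hconn v0 v)
  obtain ⟨TM, hTM, hTMcost⟩ := mst_attained (v0 := v0) w hsym hconn
  set L : List V := euler TM v0 with hL
  obtain ⟨hLhead, hLlast, hLchain, hLmem, hLcost⟩ :=
    euler_spec TM hw hwsym (desc TM v0).card v0 le_rfl
  have hLcost2 : walkCost w L ≤ 2 * treeCost TM w := by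
    refine le_trans hLcost ?_
    rw [treeCost, desc_root]
    rw [show Finset.univ.filter (· ≠ v0) = Finset.univ.erase v0 from Finset.filter_ne' _ _]
  set B : List V := bps w d α L 0 with hB
  have hatG : ∀ v, ∃ l, IsWalk Adj v0 v l ∧ walkCost w l = d v := by
    intro v
    obtain ⟨l, h1, -, h3⟩ := graphDist_attained hw (hconn v0 v)
    exact ⟨l, h1, h3⟩
  choose P hPwalk hPcost using hatG
  set AdjH : V → V → Prop := fun a b =>
    treeAdj TM a b ∨ ∃ b' ∈ B, (a, b) ∈ (P b').zip (P b').tail with hAdjH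
  have hHsubAdj : ∀ a b, AdjH a b → Adj a b := by
    intro a b hab
    rcases hab with (⟨h1, h2⟩ | ⟨h1, h2⟩) | ⟨b', -, hmem⟩
    · rw [← h1]; exact hTM b h2
    · rw [← h1]; exact hsym _ _ (hTM a h2)
    · exact chain'_of_mem_zip (hPwalk b').1 hmem
  have hHne : ∀ v, ∃ l, IsWalk AdjH v0 v l := by
    intro v
    obtain ⟨l, hc, hh, hl⟩ := exists_treeWalk_from_root TM v
    exact ⟨l, hc.imp (fun x y hxy => Or.inl hxy), hh, hl⟩
  set f : V → ℝ := fun v => graphDist AdjH w v0 v with hf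
  have hstep : ∀ a b, treeAdj TM a b → f b ≤ f a + w a b :=
    fun a b hab => graphDist_step hw (hHne a) (Or.inl hab)
  have hfB : ∀ b ∈ B, f b ≤ d b := by
    intro b hb
    have hwalkH : IsWalk AdjH v0 b (P b) := by
      refine ⟨chain'_of_forall_zip _ ?_, (hPwalk b).2.1, (hPwalk b).2.2⟩
      intro p hp
      exact Or.inr ⟨b, hb, by rw [show (p.1, p.2) = p from rfl]; exact hp⟩
    have := graphDist_le hw hwalkH
    rw [hPcost b] at this
    exact this
  have hcover : ∀ z, f z ≤ α * d z := by
    intro z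
    refine bps_cover f hα hdnn hstep L 0 hLchain hfB ?_ z ?_
    · intro x hx
      rw [hLhead] at hx
      simp only [Option.mem_def, Option.some_inj] at hx
      subst hx
      exact le_of_eq (graphDist_self hw v0)
    · have := hLmem z (by rw [desc_root]; exact Finset.mem_univ z)
      exact this
  obtain ⟨T, hTadj, hTrec⟩ := spt_exists AdjH w hw hHne
  have hWnn : ∀ e : Sym2 V, 0 ≤ Sym2.lift ⟨w, hwsym⟩ e := by
    intro e; induction e with | _ a b => simpa using hw a b
  set W : Sym2 V → ℝ := Sym2.lift ⟨w, hwsym⟩ with hW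
  set eT : Finset (Sym2 V) :=
    (Finset.univ.filter (· ≠ v0)).image (fun v => s(TM.parent v, v)) with heT
  set EH : Finset (Sym2 V) := eT ∪ B.toFinset.biUnion (fun b => edgeFinset (P b)) with hEH
  refine ⟨T, ?_, ?_, ?_⟩
  · intro v hv
    exact hHsubAdj _ _ (hTadj v hv)
  · intro v
    exact le_trans (hTrec v) (hcover v)
  · -- cost bound
    have hmemEH : ∀ v, v ≠ v0 → s(T.parent v, v) ∈ EH := by
      intro v hv
      rcases hTadj v hv with (⟨h1, h2⟩ | ⟨h1, h2⟩) | ⟨b', hb', hmem⟩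
      · apply Finset.mem_union_left
        apply Finset.mem_image.mpr
        exact ⟨v, by simp [h2], by rw [h1]⟩
      · apply Finset.mem_union_left
        apply Finset.mem_image.mpr
        refine ⟨T.parent v, by simp [h2], ?_⟩
        rw [h1]
        exact Sym2.eq_swap
      · apply Finset.mem_union_right
        apply Finset.mem_biUnion.mpr
        refine ⟨b', List.mem_toFinset.mpr hb', ?_⟩
        apply List.mem_toFinset.mpr
        exact List.mem_map.mpr ⟨(T.parent v, v), hmem, rfl⟩
    have h1 : treeCost T w = ∑ e ∈ (Finset.univ.filter (· ≠ v0)).image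
        (fun v => s(T.parent v, v)), W e := by
      rw [treeCost, Finset.sum_image]
      · apply Finset.sum_congr rfl
        intro v _
        rw [hW]
        simp
      · intro x hx y hy
        exact parentEdge_injOn T x (Finset.mem_filter.mp hx).2 y (Finset.mem_filter.mp hy).2
    have h2 : (Finset.univ.filter (· ≠ v0)).image (fun v => s(T.parent v, v)) ⊆ EH := by
      intro e he
      obtain ⟨v, hv, rfl⟩ := Finset.mem_image.mp he
      exact hmemEH v (Finset.mem_filter.mp hv).2
    have h3 : treeCost T w ≤ ∑ e ∈ EH, W e := by
      rw [h1]
      exact Finset.sum_le_sum_of_subset_of_nonneg h2 (fun i _ _ => hWnn i)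
    have h4 : ∑ e ∈ eT, W e = treeCost TM w := by
      rw [heT, Finset.sum_image, treeCost]
      · apply Finset.sum_congr rfl
        intro v _
        rw [hW]; simp
      · intro x hx y hy
        exact parentEdge_injOn TM x (Finset.mem_filter.mp hx).2 y (Finset.mem_filter.mp hy).2
    have h5 : ∑ e ∈ EH, W e ≤ treeCost TM w + (B.map d).sum := by
      rw [hEH]
      refine le_trans (sum_union_le W hWnn _ _) ?_
      rw [h4]
      have h6 : ∑ e ∈ B.toFinset.biUnion (fun b => edgeFinset (P b)), W e
          ≤ ∑ b ∈ B.toFinset, ∑ e ∈ edgeFinset (P b), W e :=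
        sum_biUnion_le W hWnn _ _
      have h7 : ∑ b ∈ B.toFinset, ∑ e ∈ edgeFinset (P b), W e ≤ ∑ b ∈ B.toFinset, d b := by
        apply Finset.sum_le_sum
        intro b _
        rw [← hPcost b]
        exact sum_edgeFinset_le hw hwsym (P b)
      have h8 : ∑ b ∈ B.toFinset, d b ≤ (B.map d).sum := list_toFinset_sum_le d hdnn B
      linarith
    have h9 : (α - 1) * (B.map d).sum ≤ 2 * treeCost TM w := by
      have := bps_sum hα hdnn hw L 0 le_rfl
      rw [← hB] at this
      linarith
    have hα1 : 0 < α - 1 := by linarith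
    have h10 : (B.map d).sum ≤ 2 * treeCost TM w / (α - 1) := by
      rw [le_div_iff₀ hα1]
      linarith
    have hfinal : treeCost T w ≤ treeCost TM w + 2 * treeCost TM w / (α - 1) := by
      linarith
    rw [← hTMcost]
    calc treeCost T w ≤ treeCost TM w + 2 * treeCost TM w / (α - 1) := hfinal
      _ = (1 + 2 / (α - 1)) * treeCost TM w := by
          field_simp
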